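/- Let K_X be an N×N real symmetric positive definite matrix, let α > 0, let K_{Z*} = K_{Z*}(K_X, α), and set D := (1/N)·tr(K_{Z*}). Then for every N×N real symmetric positive definite matrix K_Z with (1/N)·tr(K_Z) ≤ D, it holds that log det(K_X + K_{Z*}) − log det(K_{Z*}) ≤ log det(K_X + K_Z) − log det(K_Z). That is, K_{Z*} minimizes log det(K_X + K_Z) − log det(K_Z) over all positive definite distortion covariance matrices of per-dimension trace at most D. -/

import Mathlib

open Matrix Classical
open scoped MatrixOrder

/-- The positive semidefinite square root of a matrix (junk value `0` if the matrix is not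
positive semidefinite). -/
noncomputable def matSqrt {N : ℕ} (A : Matrix (Fin N) (Fin N) ℝ) : Matrix (Fin N) (Fin N) ℝ :=
  if h : A.PosSemidef then
    (h.1.eigenvectorUnitary : Matrix (Fin N) (Fin N) ℝ) *
      diagonal ((RCLike.ofReal : ℝ → ℝ) ∘ Real.sqrt ∘ h.1.eigenvalues) *
      (star h.1.eigenvectorUnitary : Matrix (Fin N) (Fin N) ℝ)
  else 0

/-- The optimal distortion covariance matrix
`K_{Z*}(K, α) = (1/2)((K² + αK)^{1/2} − K)`. -/
noncomputable def Kzstar {N : ℕ} (K : Matrix (Fin N) (Fin N) ℝ) (α : ℝ) :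
    Matrix (Fin N) (Fin N) ℝ :=
  (1 / 2 : ℝ) • (matSqrt (K ^ 2 + α • K) - K)


section helpers
variable {N : ℕ}

lemma psd_diag_nonneg {A : Matrix (Fin N) (Fin N) ℝ} (hA : A.PosSemidef) (i : Fin N) :
    0 ≤ A i i := by
  exact hA.diag_nonneg

lemma psd_trace_nonneg {A : Matrix (Fin N) (Fin N) ℝ} (hA : A.PosSemidef) : 0 ≤ A.trace :=
  Finset.sum_nonneg fun i _ => psd_diag_nonneg hA i

lemma psd_trace_mul_nonneg {A B : Matrix (Fin N) (Fin N) ℝ} (hA : A.PosSemidef)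
    (hB : B.PosSemidef) : 0 ≤ (A * B).trace := by
  have h1 : A * B = CFC.sqrt A * CFC.sqrt A * B := by rw [CFC.sqrt_mul_sqrt_self A hA.nonneg]
  have h2 : (CFC.sqrt A * CFC.sqrt A * B).trace = (CFC.sqrt A * B * CFC.sqrt A).trace :=
    (Matrix.trace_mul_cycle (CFC.sqrt A) B (CFC.sqrt A)).symm
  have h3 : (CFC.sqrt A * B * CFC.sqrt A).PosSemidef := by
    have := hB.conjTranspose_mul_mul_same (CFC.sqrt A)
    rwa [(CFC.sqrt_nonneg A).posSemidef.1] at this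
  rw [h1, h2]
  exact psd_trace_nonneg h3

lemma posDef_conj {A B : Matrix (Fin N) (Fin N) ℝ} (hA : A.PosDef) (hB : IsUnit B.det) :
    (B * A * Bᴴ).PosDef := by
  exact hA.mul_mul_conjTranspose_same
    (Matrix.vecMul_injective_iff_isUnit.2 ((Matrix.isUnit_iff_isUnit_det _).2 hB))

end helpers


section cgsec
variable {N : ℕ}

noncomputable def cg (V : Matrix (Fin N) (Fin N) ℝ) (f : Fin N → ℝ) : Matrix (Fin N) (Fin N) ℝ :=
  V * Matrix.diagonal f * Vᴴ

variable {V : Matrix (Fin N) (Fin N) ℝ}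

lemma cg_mul (hV' : Vᴴ * V = 1) (f g : Fin N → ℝ) : cg V f * cg V g = cg V (f * g) := by
  unfold cg
  rw [show V * Matrix.diagonal f * Vᴴ * (V * Matrix.diagonal g * Vᴴ)
      = V * (Matrix.diagonal f * (Vᴴ * V) * Matrix.diagonal g) * Vᴴ by
    simp only [Matrix.mul_assoc], hV']
  rw [Matrix.mul_one, Matrix.diagonal_mul_diagonal]
  rfl

lemma cg_add (f g : Fin N → ℝ) : cg V f + cg V g = cg V (f + g) := by
  unfold cg
  have h : Matrix.diagonal (f + g) = Matrix.diagonal f + Matrix.diagonal g :=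
    (Matrix.diagonal_add f g).symm
  rw [h, Matrix.mul_add, Matrix.add_mul]

lemma cg_sub (f g : Fin N → ℝ) : cg V f - cg V g = cg V (f - g) := by
  unfold cg
  have h : Matrix.diagonal (f - g) = Matrix.diagonal f - Matrix.diagonal g :=
    (Matrix.diagonal_sub f g).symm
  rw [h, Matrix.mul_sub, Matrix.sub_mul]

lemma cg_smul (c : ℝ) (f : Fin N → ℝ) : c • cg V f = cg V (c • f) := by
  unfold cg
  have h : Matrix.diagonal (c • f) = c • Matrix.diagonal f := Matrix.diagonal_smul c f
  rw [h, Matrix.mul_smul, Matrix.smul_mul]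

lemma cg_one (hV : V * Vᴴ = 1) : cg V 1 = 1 := by
  unfold cg
  rw [show (1 : Fin N → ℝ) = fun _ => (1:ℝ) from rfl, Matrix.diagonal_one, Matrix.mul_one, hV]

lemma cg_herm (f : Fin N → ℝ) : (cg V f)ᴴ = cg V f := by
  unfold cg
  simp [Matrix.conjTranspose_mul, Matrix.diagonal_conjTranspose, Matrix.mul_assoc]

lemma cg_det (hV : V * Vᴴ = 1) (f : Fin N → ℝ) : (cg V f).det = ∏ i, f i := by
  unfold cg
  have h1 : V.det * (Vᴴ).det = 1 := by rw [← Matrix.det_mul, hV, Matrix.det_one]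
  rw [Matrix.det_mul, Matrix.det_mul, Matrix.det_diagonal]
  linear_combination (∏ i, f i) * h1

lemma cg_trace (hV' : Vᴴ * V = 1) (f : Fin N → ℝ) : (cg V f).trace = ∑ i, f i := by
  unfold cg
  rw [Matrix.trace_mul_cycle, hV', Matrix.one_mul, Matrix.trace_diagonal]

lemma cg_congr {f g : Fin N → ℝ} (h : ∀ i, f i = g i) : cg V f = cg V g := by
  rw [funext h]

lemma cg_psd {f : Fin N → ℝ} (hf : ∀ i, 0 ≤ f i) : (cg V f).PosSemidef :=
  (Matrix.PosSemidef.diagonal hf).mul_mul_conjTranspose_same V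

lemma cg_pd (hV : V * Vᴴ = 1) {f : Fin N → ℝ} (hf : ∀ i, 0 < f i) : (cg V f).PosDef := by
  have h1 : V.det * (Vᴴ).det = 1 := by rw [← Matrix.det_mul, hV, Matrix.det_one]
  exact posDef_conj (Matrix.posDef_diagonal_iff.2 hf) (IsUnit.of_mul_eq_one _ h1)

lemma cg_inv (hV : V * Vᴴ = 1) (hV' : Vᴴ * V = 1) {f : Fin N → ℝ} (hf : ∀ i, f i ≠ 0) :
    (cg V f)⁻¹ = cg V f⁻¹ := by
  apply Matrix.inv_eq_right_inv
  rw [cg_mul hV']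
  have : f * f⁻¹ = 1 := by
    funext i
    exact mul_inv_cancel₀ (hf i)
  rw [this, cg_one hV]

end cgsec

section spec
variable {N : ℕ}


lemma herm_spectral {A : Matrix (Fin N) (Fin N) ℝ} (hA : A.IsHermitian) :
    (hA.eigenvectorUnitary : Matrix (Fin N) (Fin N) ℝ) *
        (hA.eigenvectorUnitary : Matrix (Fin N) (Fin N) ℝ)ᴴ = 1 ∧
      (hA.eigenvectorUnitary : Matrix (Fin N) (Fin N) ℝ)ᴴ *
        (hA.eigenvectorUnitary : Matrix (Fin N) (Fin N) ℝ) = 1 ∧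
      A = cg (hA.eigenvectorUnitary : Matrix (Fin N) (Fin N) ℝ) hA.eigenvalues := by
  refine ⟨?_, ?_, ?_⟩
  · rw [← Matrix.star_eq_conjTranspose]
    exact Matrix.mem_unitaryGroup_iff.mp hA.eigenvectorUnitary.2
  · rw [← Matrix.star_eq_conjTranspose]
    exact Matrix.mem_unitaryGroup_iff'.mp hA.eigenvectorUnitary.2
  · have h := hA.spectral_theorem
    rw [Unitary.conjStarAlgAut_apply] at h
    have hid : (RCLike.ofReal ∘ hA.eigenvalues : Fin N → ℝ) = hA.eigenvalues := rfl
    rw [hid] at h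
    unfold cg
    rw [← Matrix.star_eq_conjTranspose]
    convert h using 2

end spec

section ringids
variable {R : Type*} [Ring R]

lemma ring_id1 (K M P Ki Pi : R) (hP : P = K + M)
    (hK : K * Ki = 1) (hK' : Ki * K = 1) (hPm : P * Pi = 1) (hPm' : Pi * P = 1) :
    Ki - Pi = Pi * M * Pi + Pi * M * Ki * M * Pi := by
  have hM : M = P - K := by rw [hP]; abel
  have step1 : Pi * M * Ki = Ki - Pi := by
    have e : Pi * M * Ki = Pi * P * Ki - Pi * (K * Ki) := by rw [hM]; noncomm_ring
    rw [e, hPm', hK, one_mul, mul_one]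
  have e1 : Pi * M * Pi + Pi * M * Ki * M * Pi = Pi * M * ((1 + Ki * M) * Pi) := by noncomm_ring
  have e2 : (1 : R) + Ki * M = Ki * P := by rw [hP, mul_add, hK']
  have e4 : Pi * M * ((1 + Ki * M) * Pi) = Pi * M * Ki := by
    rw [e2, mul_assoc Ki P Pi, hPm, mul_one]
  rw [e1, e4]
  exact step1.symm

lemma ring_id2 (W T Wi Ti : R) (hW : W * Wi = 1) (hW' : Wi * W = 1)
    (hT : T * Ti = 1) (hT' : Ti * T = 1) :
    Wi - Ti + Ti * (W - T) * Ti = Ti * (W - T) * Wi * ((W - T) * Ti) := by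
  have h1 : Ti * (W - T) * Wi = Ti - Wi := by
    have e : Ti * (W - T) * Wi = Ti * (W * Wi) - Ti * T * Wi := by noncomm_ring
    rw [e, hW, hT', mul_one, one_mul]
  rw [h1]
  have e2 : (Ti - Wi) * ((W - T) * Ti) =
      Ti * W * Ti - Ti * T * Ti - Wi * W * Ti + Wi * (T * Ti) := by noncomm_ring
  have e3 : Wi - Ti + Ti * (W - T) * Ti = Wi - Ti + (Ti * W * Ti - Ti * T * Ti) := by noncomm_ring
  rw [e2, e3, hT, hT', hW']
  simp only [one_mul, mul_one]
  abel
end ringids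

section tangent
variable {N : ℕ}

lemma pd_logdet_le_trace {Z : Matrix (Fin N) (Fin N) ℝ} (hZ : Z.PosDef) :
    Real.log Z.det ≤ Z.trace - N := by
  have hH : Z.IsHermitian := hZ.1
  have hev : ∀ i, 0 < hH.eigenvalues i := hZ.eigenvalues_pos
  obtain ⟨hV, hV', hrep⟩ := herm_spectral hH
  have hdet : Z.det = ∏ i, hH.eigenvalues i := by
    conv_lhs => rw [hrep]
    exact cg_det hV _
  have htr : Z.trace = ∑ i, hH.eigenvalues i := by
    conv_lhs => rw [hrep]
    exact cg_trace hV' _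
  rw [hdet, htr, Real.log_prod (fun i _ => (hev i).ne')]
  have h1 : ∑ i, Real.log (hH.eigenvalues i) ≤ ∑ i, (hH.eigenvalues i - 1) :=
    Finset.sum_le_sum fun i _ => Real.log_le_sub_one_of_pos (hev i)
  have h2 : ∑ i, (hH.eigenvalues i - 1) = (∑ i, hH.eigenvalues i) - N := by
    rw [Finset.sum_sub_distrib]
    simp
  linarith

lemma logdet_tangent {X Y : Matrix (Fin N) (Fin N) ℝ} (hX : X.PosDef) (hY : Y.PosDef) :
    Real.log Y.det ≤ Real.log X.det + (X⁻¹ * (Y - X)).trace := by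
  have hH : X.IsHermitian := hX.1
  obtain ⟨hV, hV', hrep⟩ := herm_spectral hH
  set x : Fin N → ℝ := hH.eigenvalues with hxdef
  have hxpos : ∀ i, 0 < x i := hX.eigenvalues_pos
  set V : Matrix (Fin N) (Fin N) ℝ := (hH.eigenvectorUnitary : Matrix (Fin N) (Fin N) ℝ)
  set r : Fin N → ℝ := fun i => Real.sqrt (x i)⁻¹ with hrdef
  set W : Matrix (Fin N) (Fin N) ℝ := cg V r with hWdef
  have hXinv : X⁻¹ = cg V x⁻¹ := by
    conv_lhs => rw [hrep]
    exact cg_inv hV hV' (fun i => (hxpos i).ne')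
  have hrr : r * r = x⁻¹ := by
    funext i
    exact Real.mul_self_sqrt (inv_nonneg.2 (hxpos i).le)
  have hWW : W * W = X⁻¹ := by rw [hWdef, cg_mul hV', hrr, hXinv]
  have hWpd : W.PosDef := cg_pd hV (fun i => Real.sqrt_pos.2 (inv_pos.2 (hxpos i)))
  set Z : Matrix (Fin N) (Fin N) ℝ := W * Y * W with hZdef
  have hZpd : Z.PosDef := by
    have := posDef_conj hY ((Matrix.isUnit_iff_isUnit_det _).1 hWpd.isUnit)
    rwa [cg_herm] at this
  have hXdetU : IsUnit X.det := isUnit_iff_ne_zero.2 hX.det_pos.ne'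
  have htr1 : (X⁻¹ * (Y - X)).trace = Z.trace - N := by
    rw [Matrix.mul_sub, Matrix.trace_sub, Matrix.nonsing_inv_mul _ hXdetU]
    have h3 : X⁻¹ * Y = W * (W * Y) := by rw [← Matrix.mul_assoc, hWW]
    have h4 : (W * (W * Y)).trace = Z.trace := by
      rw [hZdef, Matrix.trace_mul_cycle, Matrix.mul_assoc]
    rw [h3, h4, Matrix.trace_one]
    simp
  have hdet1 : Real.log Z.det = Real.log Y.det - Real.log X.det := by
    have h5 : Z.det = X.det⁻¹ * Y.det := by
      have : Z.det = W.det * Y.det * W.det := by rw [hZdef, Matrix.det_mul, Matrix.det_mul]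
      have h6 : W.det * W.det = X.det⁻¹ := by
        rw [← Matrix.det_mul, hWW, Matrix.det_nonsing_inv, Ring.inverse_eq_inv']
      rw [this]
      linear_combination Y.det * h6
    rw [h5, Real.log_mul (inv_ne_zero hX.det_pos.ne') hY.det_pos.ne', Real.log_inv]
    ring
  have := pd_logdet_le_trace hZpd
  linarith

end tangent

section ufacts
variable {N : ℕ}

lemma Ufacts {KX R M : Matrix (Fin N) (Fin N) ℝ} (hKX : KX.PosDef) (hR : R.PosDef)
    (hR2 : R * R = KX) (hM : M.PosDef) :
    (R * (KX + M)⁻¹ * R).PosDef ∧ (1 - R * (KX + M)⁻¹ * R).PosDef ∧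
      M.det = (KX + M).det * (1 - R * (KX + M)⁻¹ * R).det ∧
      M.trace = (KX * (R * (KX + M)⁻¹ * R)⁻¹).trace - KX.trace := by
  have hP : (KX + M).PosDef := hKX.add_posSemidef hM.posSemidef
  set P : Matrix (Fin N) (Fin N) ℝ := KX + M with hPdef
  have hPi : P⁻¹.PosDef := hP.inv
  have hPdetU : IsUnit P.det := isUnit_iff_ne_zero.2 hP.det_pos.ne'
  have hKdetU : IsUnit KX.det := isUnit_iff_ne_zero.2 hKX.det_pos.ne'
  have hRdetU : IsUnit R.det := isUnit_iff_ne_zero.2 hR.det_pos.ne'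
  have hRherm : Rᴴ = R := hR.1
  have hPP : P * P⁻¹ = 1 := Matrix.mul_nonsing_inv _ hPdetU
  have hPP' : P⁻¹ * P = 1 := Matrix.nonsing_inv_mul _ hPdetU
  have hKK : KX * KX⁻¹ = 1 := Matrix.mul_nonsing_inv _ hKdetU
  have hKK' : KX⁻¹ * KX = 1 := Matrix.nonsing_inv_mul _ hKdetU
  have hRR : R * R⁻¹ = 1 := Matrix.mul_nonsing_inv _ hRdetU
  have hRR' : R⁻¹ * R = 1 := Matrix.nonsing_inv_mul _ hRdetU
  have cRRi : ∀ X : Matrix (Fin N) (Fin N) ℝ, R * (R⁻¹ * X) = X := fun X => by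
    rw [← Matrix.mul_assoc, hRR, Matrix.one_mul]
  have cRiR : ∀ X : Matrix (Fin N) (Fin N) ℝ, R⁻¹ * (R * X) = X := fun X => by
    rw [← Matrix.mul_assoc, hRR', Matrix.one_mul]
  have cPPi : ∀ X : Matrix (Fin N) (Fin N) ℝ, P * (P⁻¹ * X) = X := fun X => by
    rw [← Matrix.mul_assoc, hPP, Matrix.one_mul]
  have cPiP : ∀ X : Matrix (Fin N) (Fin N) ℝ, P⁻¹ * (P * X) = X := fun X => by
    rw [← Matrix.mul_assoc, hPP', Matrix.one_mul]
  set U : Matrix (Fin N) (Fin N) ℝ := R * P⁻¹ * R with hUdef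
  have hU : U.PosDef := by
    have := posDef_conj hPi hRdetU
    rwa [hRherm] at this
  have hUdetU : IsUnit U.det := isUnit_iff_ne_zero.2 hU.det_pos.ne'
  have hUinv : U⁻¹ = R⁻¹ * P * R⁻¹ := by
    apply Matrix.inv_eq_right_inv
    show R * P⁻¹ * R * (R⁻¹ * P * R⁻¹) = 1
    simp only [Matrix.mul_assoc, cRRi, cRiR, cPPi, cPiP, hRR, hRR', hPP, hPP', Matrix.mul_one]
  have hRUR : R * U⁻¹ * R = P := by
    rw [hUinv]
    simp only [Matrix.mul_assoc, cRRi, cRiR, hRR', Matrix.mul_one]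
  have hMeq : M = R * (U⁻¹ - 1) * R := by
    have h : R * (U⁻¹ - 1) * R = R * U⁻¹ * R - R * R := by noncomm_ring
    rw [h, hRUR, hR2, hPdef]
    abel
  -- 1 - U is positive definite
  have key1 : KX⁻¹ - P⁻¹ = P⁻¹ * M * P⁻¹ + P⁻¹ * M * KX⁻¹ * M * P⁻¹ :=
    ring_id1 KX M P KX⁻¹ P⁻¹ hPdef hKK hKK' hPP hPP'
  have h1 : (P⁻¹ * M * P⁻¹).PosDef := by
    have := posDef_conj hM (isUnit_iff_ne_zero.2 hPi.det_pos.ne')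
    rwa [hPi.1] at this
  have h2 : (P⁻¹ * M * KX⁻¹ * M * P⁻¹).PosSemidef := by
    have h3 := hKX.inv.posSemidef.mul_mul_conjTranspose_same (P⁻¹ * M)
    rw [Matrix.conjTranspose_mul, hPi.1, hM.1] at h3
    have h4 : P⁻¹ * M * KX⁻¹ * (M * P⁻¹) = P⁻¹ * M * KX⁻¹ * M * P⁻¹ := by
      simp only [Matrix.mul_assoc]
    rwa [h4] at h3
  have hsum : (KX⁻¹ - P⁻¹).PosDef := by
    rw [key1]
    exact h1.add_posSemidef h2
  have hform : 1 - U = R * (KX⁻¹ - P⁻¹) * R := by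
    have h : R * (KX⁻¹ - P⁻¹) * R = R * KX⁻¹ * R - R * P⁻¹ * R := by noncomm_ring
    have hRKiR : R * KX⁻¹ * R = 1 := by
      rw [← hR2, Matrix.mul_inv_rev]
      simp only [Matrix.mul_assoc, cRRi, cRiR, hRR, hRR', Matrix.mul_one]
    rw [h, hRKiR, hUdef]
  have h1U : (1 - U).PosDef := by
    rw [hform]
    have := posDef_conj hsum hRdetU
    rwa [hRherm] at this
  -- determinant identity
  have hRdet2 : R.det * R.det = KX.det := by rw [← Matrix.det_mul, hR2]
  have hUdet : U.det = R.det * P.det⁻¹ * R.det := by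
    rw [hUdef, Matrix.det_mul, Matrix.det_mul, Matrix.det_nonsing_inv, Ring.inverse_eq_inv']
  have hPne : P.det ≠ 0 := hP.det_pos.ne'
  have hPU : P.det * U.det = KX.det := by
    rw [hUdet, ← hRdet2]
    field_simp
  have hUinv1U : U⁻¹ * (1 - U) = U⁻¹ - 1 := by
    rw [Matrix.mul_sub, Matrix.mul_one, Matrix.nonsing_inv_mul _ hUdetU]
  have hdetM : M.det = P.det * (1 - U).det := by
    have h5 : M.det = R.det * (U⁻¹ - 1).det * R.det := by
      rw [hMeq, Matrix.det_mul, Matrix.det_mul]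
    have h6 : (U⁻¹ - 1).det = U.det⁻¹ * (1 - U).det := by
      rw [← hUinv1U, Matrix.det_mul, Matrix.det_nonsing_inv, Ring.inverse_eq_inv']
    have hUne : U.det ≠ 0 := hU.det_pos.ne'
    have eL : M.det * U.det = KX.det * (1 - U).det := by
      rw [h5, h6, ← hRdet2]
      field_simp
    have eR : P.det * (1 - U).det * U.det = KX.det * (1 - U).det := by
      rw [← hPU]; ring
    exact mul_right_cancel₀ hUne (eL.trans eR.symm)
  -- trace identity
  have htrM : M.trace = (KX * U⁻¹).trace - KX.trace := by
    conv_lhs => rw [hMeq]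
    rw [Matrix.trace_mul_cycle, hR2, Matrix.mul_sub, Matrix.mul_one, Matrix.trace_sub]
  exact ⟨hU, h1U, hdetM, htrM⟩

end ufacts

set_option maxHeartbeats 1600000 in
theorem stmt_14 {N : ℕ} (KX : Matrix (Fin N) (Fin N) ℝ) (hKX : KX.PosDef)
    (α : ℝ) (hα : 0 < α) :
    ∀ KZ : Matrix (Fin N) (Fin N) ℝ, KZ.PosDef →
      ((N : ℝ))⁻¹ * Matrix.trace KZ ≤ ((N : ℝ))⁻¹ * Matrix.trace (Kzstar KX α) →
      Real.log (KX + Kzstar KX α).det - Real.log (Kzstar KX α).det ≤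
        Real.log (KX + KZ).det - Real.log KZ.det := by
  intro KZ hKZ htrace
  have hH : KX.IsHermitian := hKX.1
  obtain ⟨hV, hV', hrep⟩ := herm_spectral hH
  set V : Matrix (Fin N) (Fin N) ℝ := (hH.eigenvectorUnitary : Matrix (Fin N) (Fin N) ℝ)
    with hVdef
  set d : Fin N → ℝ := hH.eigenvalues with hddef
  have hd : ∀ i, 0 < d i := hKX.eigenvalues_pos
  set s : Fin N → ℝ := fun i => Real.sqrt (d i ^ 2 + α * d i) with hsdef
  have harg : ∀ i, 0 ≤ d i ^ 2 + α * d i := fun i => by nlinarith [hd i, hα]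
  have hs2 : ∀ i, s i * s i = d i ^ 2 + α * d i := fun i => Real.mul_self_sqrt (harg i)
  have hs0 : ∀ i, 0 ≤ s i := fun i => Real.sqrt_nonneg _
  have hsd : ∀ i, d i < s i := fun i => by
    nlinarith [hs2 i, hs0 i, hd i, mul_pos hα (hd i)]
  set a : Fin N → ℝ := fun i => (s i - d i) / 2 with hadef
  have ha : ∀ i, 0 < a i := fun i => by
    have := hsd i
    show 0 < (s i - d i) / 2
    linarith
  have hkey : ∀ i, a i * (d i + a i) = α * d i / 4 := fun i => by
    show (s i - d i) / 2 * (d i + (s i - d i) / 2) = α * d i / 4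
    nlinarith [hs2 i]
  have hKX2 : KX ^ 2 + α • KX = cg V (fun i => d i ^ 2 + α * d i) := by
    have h1 : KX ^ 2 = cg V (d * d) := by
      rw [pow_two]
      conv_lhs => rw [hrep]
      rw [cg_mul hV']
    have h2 : α • KX = cg V (α • d) := by
      conv_lhs => rw [hrep]
      rw [cg_smul]
    rw [h1, h2, cg_add]
    exact cg_congr fun i => by
      show d i * d i + α * d i = d i ^ 2 + α * d i
      ring
  have hKX2psd : (KX ^ 2 + α • KX).PosSemidef := by
    rw [hKX2]; exact cg_psd harg
  have hsqrt : matSqrt (KX ^ 2 + α • KX) = cg V s := by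
    simp only [matSqrt, dif_pos hKX2psd]
    have hc := hKX2psd.1.cfc_eq Real.sqrt
    rw [Matrix.IsHermitian.cfc, Unitary.conjStarAlgAut_apply] at hc
    have e : CFC.sqrt (KX ^ 2 + α • KX) = cfc Real.sqrt (KX ^ 2 + α • KX) := by
      rw [CFC.sqrt_eq_real_sqrt _ hKX2psd.nonneg, cfcₙ_eq_cfc (hf0 := Real.sqrt_zero)]
    rw [← hc, ← e]
    refine CFC.sqrt_unique ?_ (cg_psd hs0).nonneg
    rw [cg_mul hV', hKX2]
    exact cg_congr hs2
  set A : Matrix (Fin N) (Fin N) ℝ := Kzstar KX α with hAdef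
  have hA : A = cg V a := by
    rw [hAdef, Kzstar, hsqrt]
    conv_lhs => rw [hrep]
    rw [cg_sub, cg_smul]
    exact cg_congr fun i => by
      show (1/2 : ℝ) * (s i - d i) = (s i - d i) / 2
      ring
  have hApd : A.PosDef := by rw [hA]; exact cg_pd hV ha
  set r : Fin N → ℝ := fun i => Real.sqrt (d i) with hrdef
  set R : Matrix (Fin N) (Fin N) ℝ := cg V r with hRdef
  have hR2 : R * R = KX := by
    rw [hRdef, cg_mul hV']
    conv_rhs => rw [hrep]
    exact cg_congr fun i => Real.mul_self_sqrt (hd i).le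
  have hRpd : R.PosDef := cg_pd hV fun i => Real.sqrt_pos.2 (hd i)
  obtain ⟨hUz, h1Uz, hdetz, htrz⟩ := Ufacts hKX hRpd hR2 hKZ
  obtain ⟨hUa, h1Ua, hdeta, htra⟩ := Ufacts hKX hRpd hR2 hApd
  set Uz : Matrix (Fin N) (Fin N) ℝ := R * (KX + KZ)⁻¹ * R with hUzdef
  set Ua : Matrix (Fin N) (Fin N) ℝ := R * (KX + A)⁻¹ * R with hUadef
  set u : Fin N → ℝ := fun i => d i / (d i + a i) with hudef
  have hda : ∀ i, 0 < d i + a i := fun i => by have h1 := hd i; have h2 := ha i; linarith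
  have hKA : KX + A = cg V (fun i => d i + a i) := by
    conv_lhs => rw [hrep, hA]
    rw [cg_add]
    exact cg_congr fun i => rfl
  have hKAinv : (KX + A)⁻¹ = cg V (fun i => (d i + a i)⁻¹) := by
    rw [hKA, cg_inv hV hV' (fun i => (hda i).ne')]
    exact cg_congr fun i => rfl
  have hUaeq : Ua = cg V u := by
    rw [hUadef, hKAinv, hRdef, cg_mul hV', cg_mul hV']
    refine cg_congr fun i => ?_
    show Real.sqrt (d i) * (d i + a i)⁻¹ * Real.sqrt (d i) = d i / (d i + a i)
    have hss := Real.mul_self_sqrt (hd i).le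
    rw [div_eq_mul_inv]
    linear_combination (d i + a i)⁻¹ * hss
  have hupos : ∀ i, 0 < u i := fun i => div_pos (hd i) (hda i)
  have hu1 : ∀ i, 0 < 1 - u i := fun i => by
    have h1 : u i < 1 := by
      show d i / (d i + a i) < 1
      rw [div_lt_one (hda i)]
      linarith [ha i]
    linarith
  have h1Uaeq : 1 - Ua = cg V (fun i => 1 - u i) := by
    rw [hUaeq, ← cg_one hV, cg_sub]
    exact cg_congr fun i => rfl
  have h1Uainv : (1 - Ua)⁻¹ = cg V (fun i => (1 - u i)⁻¹) := by
    rw [h1Uaeq, cg_inv hV hV' (fun i => (hu1 i).ne')]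
    exact cg_congr fun i => rfl
  have hUainv : Ua⁻¹ = cg V (fun i => (u i)⁻¹) := by
    rw [hUaeq, cg_inv hV hV' (fun i => (hupos i).ne')]
    exact cg_congr fun i => rfl
  have hstat : (1 - Ua)⁻¹ = (4/α) • (Ua⁻¹ * (KX * Ua⁻¹)) := by
    rw [h1Uainv, hUainv]
    conv_rhs => rw [hrep]
    rw [cg_mul hV', cg_mul hV', cg_smul]
    refine (cg_congr fun i => ?_).symm
    show (4/α) * ((u i)⁻¹ * (d i * (u i)⁻¹)) = (1 - u i)⁻¹
    have h1 := (hd i).ne'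
    have h2 := (hda i).ne'
    have h3 := (ha i).ne'
    have e1 : (1 : ℝ) - u i = a i / (d i + a i) := by
      show (1:ℝ) - d i / (d i + a i) = a i / (d i + a i)
      field_simp
      ring
    have e3 : u i = d i / (d i + a i) := rfl
    rw [e1, e3, inv_div, inv_div]
    field_simp
    linear_combination 4 * hkey i
  have hT1 := logdet_tangent h1Ua h1Uz
  have hUzdetU : IsUnit Uz.det := isUnit_iff_ne_zero.2 hUz.det_pos.ne'
  have hUadetU : IsUnit Ua.det := isUnit_iff_ne_zero.2 hUa.det_pos.ne'
  have hid2 := ring_id2 Uz Ua Uz⁻¹ Ua⁻¹ (Matrix.mul_nonsing_inv _ hUzdetU)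
      (Matrix.nonsing_inv_mul _ hUzdetU) (Matrix.mul_nonsing_inv _ hUadetU)
      (Matrix.nonsing_inv_mul _ hUadetU)
  have hpsd : (Uz⁻¹ - Ua⁻¹ + Ua⁻¹ * (Uz - Ua) * Ua⁻¹).PosSemidef := by
    rw [hid2]
    have h7 := hUz.inv.posSemidef.conjTranspose_mul_mul_same ((Uz - Ua) * Ua⁻¹)
    rw [Matrix.conjTranspose_mul, Matrix.conjTranspose_sub, hUa.inv.1, hUz.1, hUa.1] at h7
    exact h7
  have hconv : 0 ≤ (KX * (Uz⁻¹ - Ua⁻¹ + Ua⁻¹ * (Uz - Ua) * Ua⁻¹)).trace :=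
    psd_trace_mul_nonneg hKX.posSemidef hpsd
  set T2 : ℝ := (KX * (Ua⁻¹ * (Uz - Ua) * Ua⁻¹)).trace with hT2def
  have hexp : (KX * (Uz⁻¹ - Ua⁻¹ + Ua⁻¹ * (Uz - Ua) * Ua⁻¹)).trace
      = (KX * Uz⁻¹).trace - (KX * Ua⁻¹).trace + T2 := by
    rw [Matrix.mul_add, Matrix.mul_sub, Matrix.trace_add, Matrix.trace_sub]
  have htrKZ : KZ.trace ≤ A.trace := by
    rcases Nat.eq_zero_or_pos N with hN | hN
    · subst hN
      simp [Matrix.trace]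
    · have hNpos : (0:ℝ) < ((N:ℝ))⁻¹ := by
        have h : (0:ℝ) < (N:ℝ) := by exact_mod_cast hN
        positivity
      exact le_of_mul_le_mul_left htrace hNpos
  have hT2pos : A.trace - KZ.trace ≤ T2 := by
    have h12 := hconv
    rw [hexp] at h12
    linarith [htrz, htra]
  have hc : (0:ℝ) < 4/α := by positivity
  have hT1eq : ((1 - Ua)⁻¹ * ((1 - Uz) - (1 - Ua))).trace = -((4/α) * T2) := by
    have h9 : (1 - Uz) - (1 - Ua) = Ua - Uz := by abel
    rw [h9, hstat, Matrix.smul_mul, Matrix.trace_smul, smul_eq_mul]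
    have h10 : (Ua⁻¹ * (KX * Ua⁻¹) * (Ua - Uz)).trace = -T2 := by
      have h11 : Ua⁻¹ * (KX * Ua⁻¹) * (Ua - Uz) = -(Ua⁻¹ * (KX * Ua⁻¹ * (Uz - Ua))) := by
        noncomm_ring
      rw [h11, Matrix.trace_neg]
      congr 1
      rw [Matrix.trace_mul_comm]
      rw [hT2def]
      congr 1
      simp only [Matrix.mul_assoc]
    rw [h10]
    ring
  have hdetPz : (0:ℝ) < (KX + KZ).det := (hKX.add_posSemidef hKZ.posSemidef).det_pos
  have hdetPa : (0:ℝ) < (KX + A).det := (hKX.add_posSemidef hApd.posSemidef).det_pos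
  have hlogz : Real.log KZ.det = Real.log (KX + KZ).det + Real.log (1 - Uz).det := by
    rw [hdetz, Real.log_mul hdetPz.ne' h1Uz.det_pos.ne']
  have hloga : Real.log A.det = Real.log (KX + A).det + Real.log (1 - Ua).det := by
    rw [hdeta, Real.log_mul hdetPa.ne' h1Ua.det_pos.ne']
  have hmul : (4/α) * (A.trace - KZ.trace) ≤ (4/α) * T2 :=
    mul_le_mul_of_nonneg_left hT2pos hc.le
  have hmul2 : (0:ℝ) ≤ (4/α) * (A.trace - KZ.trace) := by
    apply mul_nonneg hc.le
    linarith
  linarith [hT1, hT1eq, hlogz, hloga, hmul, hmul2]
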